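/- arXiv:2412.11522 — 2 statements merged into one kernel-verified Lean document; each statement's English description precedes it below -/
import Mathlib

section
/- Let α ∈ ℂ with α ∉ ℝ. Then G is block Hankel if and only if for all λ, ω ∈ ℂ one has (λ − \bar{α})(\bar{ω} − α)·F(λ) N_α F(ω)* = (λ − α)(\bar{ω} − \bar{α})·F(λ) N_{\bar{α}} F(ω)*. -/
open Matrix Complex
open scoped ComplexConjugate ComplexOrder

noncomputable section

/-- Index type for `ℂ^m` with `m = (n+1)p`, viewed as `n+1` blocks of size `p`. -/
abbrev Idx (n p : ℕ) : Type := Fin (n + 1) × Fin p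

/-- The `p × m` matrix polynomial `F(λ) = [I_p, λI_p, …, λ^n I_p]`. -/
def Fm (n p : ℕ) (lam : ℂ) : Matrix (Fin p) (Idx n p) ℂ :=
  Matrix.of fun i jk => lam ^ (jk.1 : ℕ) * (if jk.2 = i then 1 else 0)

/-- The `m × p` matrix `e_k` whose `k`-th block is `I_p` and other blocks are `0`. -/
def Ek (n p : ℕ) (k : Fin (n + 1)) : Matrix (Idx n p) (Fin p) ℂ :=
  Matrix.of fun jl i => if jl.1 = k ∧ jl.2 = i then 1 else 0

/-- The nilpotent block shift matrix `A` with blocks `A_{ij} = I_p` iff `j = i+1`. -/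
def Am (n p : ℕ) : Matrix (Idx n p) (Idx n p) ℂ :=
  Matrix.of fun ia jb => if (jb.1 : ℕ) = (ia.1 : ℕ) + 1 ∧ ia.2 = jb.2 then 1 else 0

/-- `N_α = Γ − ΓF(α)*(F(α)ΓF(α)*)⁻¹F(α)Γ` where `Γ = G⁻¹`. -/
def Nm (n p : ℕ) (G : Matrix (Idx n p) (Idx n p) ℂ) (α : ℂ) : Matrix (Idx n p) (Idx n p) ℂ :=
  G⁻¹ - G⁻¹ * (Fm n p α)ᴴ * (Fm n p α * G⁻¹ * (Fm n p α)ᴴ)⁻¹ * Fm n p α * G⁻¹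

/-- `G` is block Hankel: `g_{i+1,j} = g_{i,j+1}` for `0 ≤ i,j ≤ n−1`. -/
def BlockHankel (n p : ℕ) (G : Matrix (Idx n p) (Idx n p) ℂ) : Prop :=
  ∀ (i j : Fin n) (a b : Fin p),
    G (i.succ, a) (j.castSucc, b) = G (i.castSucc, a) (j.succ, b)

/-- multiplication by `(λ - b)` from degree `< n` to degree `≤ n`. -/
def Cm (n p : ℕ) (b : ℂ) : Matrix (Idx n p) (Fin n × Fin p) ℂ :=
  Matrix.of fun ia jc =>
    ((if (ia.1 : ℕ) = (jc.1 : ℕ) + 1 then 1 else 0) - b * (if (ia.1 : ℕ) = (jc.1 : ℕ) then 1 else 0))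
      * (if ia.2 = jc.2 then 1 else 0)

/-- deflation (division by `(λ - b)` after removing the value at `b`). -/
def Dm (n p : ℕ) (b : ℂ) : Matrix (Fin n × Fin p) (Idx n p) ℂ :=
  Matrix.of fun jc ia =>
    (if (jc.1 : ℕ) < (ia.1 : ℕ) then b ^ ((ia.1 : ℕ) - (jc.1 : ℕ) - 1) else 0)
      * (if jc.2 = ia.2 then 1 else 0)

/-- the short row `[I, λI, …, λ^{n-1}I]`. -/
def Fs (n p : ℕ) (lam : ℂ) : Matrix (Fin p) (Fin n × Fin p) ℂ :=
  Matrix.of fun i jk => lam ^ (jk.1 : ℕ) * (if jk.2 = i then 1 else 0)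

section lems
variable {n p : ℕ} (b lam : ℂ)

lemma mul_Cm_apply {X : Type*} [Fintype X] (M : Matrix X (Idx n p) ℂ)
    (x : X) (j : Fin n) (c : Fin p) :
    (M * Cm n p b) x (j, c) = M x (j.succ, c) - b * M x (j.castSucc, c) := by
  rw [Matrix.mul_apply, Fintype.sum_prod_type]
  have : ∀ t : Fin (n+1), ∑ d : Fin p, M x (t, d) * Cm n p b (t, d) (j, c)
      = M x (t, c) * ((if (t : ℕ) = (j : ℕ) + 1 then 1 else 0)
          - b * (if (t : ℕ) = (j : ℕ) then 1 else 0)) := by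
    intro t
    rw [Finset.sum_eq_single c]
    · simp [Cm]
    · intro d _ hd
      simp [Cm, hd]
    · intro h; exact absurd (Finset.mem_univ c) h
  simp_rw [this, mul_sub, Finset.sum_sub_distrib]
  congr 1
  · rw [Finset.sum_eq_single j.succ]
    · simp
    · intro t _ ht
      have h2 : ¬((t : ℕ) = (j : ℕ) + 1) := fun h => ht (Fin.ext (by simpa using h))
      simp [h2]
    · intro h; exact absurd (Finset.mem_univ _) h
  · rw [Finset.sum_eq_single j.castSucc]
    · simp [mul_comm]
    · intro t _ ht
      have h2 : ¬((t : ℕ) = (j : ℕ)) := fun h => ht (Fin.ext (by simpa using h))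
      simp [h2]
    · intro h; exact absurd (Finset.mem_univ _) h

lemma Dm_mul_Cm : Dm n p b * Cm n p b = 1 := by
  ext ⟨j, a⟩ ⟨i, c⟩
  rw [mul_Cm_apply]
  simp only [Dm, Matrix.of_apply, one_apply, Prod.mk.injEq, Fin.val_succ, Fin.coe_castSucc]
  rcases lt_trichotomy (j : ℕ) (i : ℕ) with h | h | h
  · have h1 : (j : ℕ) < (i : ℕ) + 1 := by omega
    have h2 : (i : ℕ) + 1 - (j : ℕ) - 1 = ((i : ℕ) - (j : ℕ) - 1) + 1 := by omega
    have h3 : ¬(j = i) := fun hc => by simp [Fin.ext_iff] at hc; omega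
    simp [h, h1, h2, h3, pow_succ]
    ring
  · have h3 : j = i := Fin.ext h
    have h4 : ¬((j : ℕ) < (i : ℕ)) := by omega
    simp [h, h3, h4]
  · have h1 : ¬((j : ℕ) < (i : ℕ) + 1) := by omega
    have h4 : ¬((j : ℕ) < (i : ℕ)) := by omega
    have h3 : ¬(j = i) := fun hc => by simp [Fin.ext_iff] at hc; omega
    simp [h1, h4, h3]

lemma Fm_mul_Cm : Fm n p lam * Cm n p b = (lam - b) • Fs n p lam := by
  ext i ⟨j, c⟩
  rw [mul_Cm_apply]
  simp [Fm, Fs, pow_succ]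
  split_ifs <;> ring

lemma Fm_mul_Ek : Fm n p b * Ek n p 0 = 1 := by
  ext i c
  rw [Matrix.mul_apply, Finset.sum_eq_single ((0 : Fin (n+1)), c)]
  · simp [Fm, Ek, one_apply, eq_comm]
  · intro z _ hz
    rcases z with ⟨t, d⟩
    by_cases ht : t = 0
    · have hd : ¬(d = c) := fun hc => hz (by rw [ht, hc])
      simp [Ek, hd]
    · simp [Ek, ht]
  · intro h; exact absurd (Finset.mem_univ _) h

lemma Cm_mul_Dm : Cm n p b * Dm n p b = 1 - Ek n p 0 * Fm n p b := by
  ext ⟨k, a⟩ ⟨l, c⟩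
  rw [Matrix.mul_apply, Fintype.sum_prod_type]
  have key : ∀ j : Fin n, ∑ d : Fin p, Cm n p b (k, a) (j, d) * Dm n p b (j, d) (l, c)
      = (((if (k : ℕ) = (j : ℕ) + 1 then 1 else 0) - b * (if (k : ℕ) = (j : ℕ) then 1 else 0))
          * (if (j : ℕ) < (l : ℕ) then b ^ ((l : ℕ) - (j : ℕ) - 1) else 0))
          * (if a = c then 1 else 0) := by
    intro j
    rw [Finset.sum_eq_single a]
    · simp [Cm, Dm]
    · intro d _ hd
      simp [Cm, Dm, Ne.symm hd]
    · intro h; exact absurd (Finset.mem_univ _) h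
  simp_rw [key]
  rw [← Finset.sum_mul]
  have h2 : (Ek n p 0 * Fm n p b) (k, a) (l, c)
      = (if (k : ℕ) = 0 then 1 else 0) * b ^ (l : ℕ) * (if a = c then 1 else 0) := by
    rw [Matrix.mul_apply, Finset.sum_eq_single a]
    · by_cases hk : k = (0 : Fin (n + 1))
      · simp [Ek, Fm, hk, eq_comm]
      · have hk' : ¬((k : ℕ) = 0) := fun h => hk (Fin.ext h)
        simp [Ek, Fm, hk, hk']
    · intro d _ hd
      simp [Ek, Fm, Ne.symm hd]
    · intro h; exact absurd (Finset.mem_univ _) h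
  have hrhs : (1 - Ek n p 0 * Fm n p b : Matrix (Idx n p) (Idx n p) ℂ) (k, a) (l, c)
      = ((if (k : ℕ) = (l : ℕ) then 1 else 0) - (if (k : ℕ) = 0 then 1 else 0) * b ^ (l : ℕ))
          * (if a = c then 1 else 0) := by
    rw [Matrix.sub_apply, h2, Matrix.one_apply]
    by_cases hac : a = c
    · by_cases hkl : (k : ℕ) = (l : ℕ)
      · have hkl' : k = l := Fin.ext hkl
        simp [hkl', hac, hkl]
      · have hkl' : ¬((k, a) = (l, c)) := fun h => hkl (by rw [(Prod.mk.injEq ..).mp h |>.1])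
        have hkl2 : ¬(k = l) := fun h => hkl (congrArg Fin.val h)
        simp [hkl', hkl, hac, hkl2]
    · have h3 : ¬((k, a) = (l, c)) := fun h => hac ((Prod.mk.injEq ..).mp h).2
      simp [h3, hac]
  rw [hrhs]
  rw [Fin.sum_univ_eq_sum_range (fun t => (((if (k : ℕ) = t + 1 then 1 else 0)
      - b * (if (k : ℕ) = t then 1 else 0))
      * (if t < (l : ℕ) then b ^ ((l : ℕ) - t - 1) else 0)))]
  have hS1 : (∑ t ∈ Finset.range n, (if (k : ℕ) = t + 1 then 1 else 0)
        * (if t < (l : ℕ) then b ^ ((l : ℕ) - t - 1) else 0))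
      = if 1 ≤ (k : ℕ) ∧ (k : ℕ) ≤ (l : ℕ) then b ^ ((l : ℕ) - (k : ℕ)) else 0 := by
    rcases Nat.eq_zero_or_pos (k : ℕ) with hk | hk
    · rw [Finset.sum_eq_zero]
      · simp [hk]
      · intro t ht; simp [hk]
    · obtain ⟨km, hkm⟩ : ∃ km, (k : ℕ) = km + 1 := ⟨(k : ℕ) - 1, by omega⟩
      have hcond : ∀ t, ((k : ℕ) = t + 1) = (t = km) := by
        intro t; rw [hkm]; apply propext; constructor <;> omega
      simp_rw [hcond, ite_mul, one_mul, zero_mul]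
      rw [Finset.sum_ite_eq' (Finset.range n)]
      have hkml : km < n := by have := k.isLt; omega
      by_cases hkl : (k : ℕ) ≤ (l : ℕ)
      · have h5 : km < (l : ℕ) := by omega
        have h6 : (l : ℕ) - km - 1 = (l : ℕ) - (k : ℕ) := by omega
        have hk1 : 1 ≤ (k : ℕ) := hk
        simp [Finset.mem_range, hkml, h5, h6, hk1, hkl]
      · have h5 : ¬(km < (l : ℕ)) := by omega
        simp [Finset.mem_range, hkml, h5, hkl]
  have hS2 : (∑ t ∈ Finset.range n, (b * if (k : ℕ) = t then 1 else 0)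
        * (if t < (l : ℕ) then b ^ ((l : ℕ) - t - 1) else 0))
      = if (k : ℕ) < (l : ℕ) then b ^ ((l : ℕ) - (k : ℕ)) else 0 := by
    have hterm : ∀ t, (b * if (k : ℕ) = t then 1 else 0)
        * (if t < (l : ℕ) then b ^ ((l : ℕ) - t - 1) else 0)
        = if t = (k : ℕ) then b * (if t < (l : ℕ) then b ^ ((l : ℕ) - t - 1) else 0) else 0 := by
      intro t
      by_cases h : t = (k : ℕ)
      · simp [h]
      · have h' : ¬((k : ℕ) = t) := fun hc => h hc.symm
        simp [h, h']
    simp_rw [hterm]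
    rw [Finset.sum_ite_eq' (Finset.range n)]
    by_cases hkl : (k : ℕ) < (l : ℕ)
    · have hkn : (k : ℕ) < n := by have := l.isLt; omega
      simp only [Finset.mem_range, hkn, if_true, hkl]
      set e := (l : ℕ) - (k : ℕ) - 1 with he'
      rw [show (l : ℕ) - (k : ℕ) = e + 1 by omega, pow_succ]
      ring
    · simp [hkl]
  have hsum : (∑ t ∈ Finset.range n, ((if (k : ℕ) = t + 1 then 1 else 0)
        - b * (if (k : ℕ) = t then 1 else 0))
        * (if t < (l : ℕ) then b ^ ((l : ℕ) - t - 1) else 0))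
      = (if 1 ≤ (k : ℕ) ∧ (k : ℕ) ≤ (l : ℕ) then b ^ ((l : ℕ) - (k : ℕ)) else 0)
        - (if (k : ℕ) < (l : ℕ) then b ^ ((l : ℕ) - (k : ℕ)) else 0) := by
    simp_rw [sub_mul, Finset.sum_sub_distrib, hS1, hS2]
  rw [hsum]
  congr 1
  rcases Nat.eq_zero_or_pos (k : ℕ) with hk | hk
  · have h1 : ¬(1 ≤ (k : ℕ) ∧ (k : ℕ) ≤ (l : ℕ)) := by omega
    rcases Nat.eq_zero_or_pos (l : ℕ) with hl | hl
    · have h2 : ¬((k : ℕ) < (l : ℕ)) := by omega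
      have h3 : (k : ℕ) = (l : ℕ) := by omega
      simp [h1, h2, h3, hk, hl]
    · have h2 : (k : ℕ) < (l : ℕ) := by omega
      have h3 : ¬((0 : ℕ) = (l : ℕ)) := by omega
      have h4 : (l : ℕ) - (k : ℕ) = (l : ℕ) := by omega
      simp [h1, h2, h3, h4, hk, hl]
  · have hk0 : ¬((k : ℕ) = 0) := by omega
    rcases lt_trichotomy (k : ℕ) (l : ℕ) with h | h | h
    · have h2 : 1 ≤ (k : ℕ) ∧ (k : ℕ) ≤ (l : ℕ) := by omega
      have h3 : ¬((k : ℕ) = (l : ℕ)) := by omega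
      simp [h2, h, h3, hk0]
    · have h2 : 1 ≤ (k : ℕ) ∧ (k : ℕ) ≤ (l : ℕ) := by omega
      have h3 : ¬((k : ℕ) < (l : ℕ)) := by omega
      have h4 : (l : ℕ) - (k : ℕ) = 0 := by omega
      have h5 : 1 ≤ (l : ℕ) := by omega
      have h6 : ¬((l : ℕ) = 0) := by omega
      simp [h2, h, h3, h4, hk0, h5, h6]
    · have h2 : ¬(1 ≤ (k : ℕ) ∧ (k : ℕ) ≤ (l : ℕ)) := by omega
      have h3 : ¬((k : ℕ) < (l : ℕ)) := by omega
      have h4 : ¬((k : ℕ) = (l : ℕ)) := by omega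
      rw [if_neg h2, if_neg h3, if_neg h4, if_neg hk0]
      ring

lemma CmT_mul_apply {X : Type*} [Fintype X] (M : Matrix (Idx n p) X ℂ)
    (j : Fin n) (c : Fin p) (y : X) :
    ((Cm n p b)ᴴ * M) (j, c) y
      = M (j.succ, c) y - (starRingEnd ℂ) b * M (j.castSucc, c) y := by
  have h1 : (Cm n p b)ᴴ * M = (Mᴴ * Cm n p b)ᴴ := by
    rw [Matrix.conjTranspose_mul, Matrix.conjTranspose_conjTranspose]
  rw [h1, Matrix.conjTranspose_apply, mul_Cm_apply]
  simp [Matrix.conjTranspose_apply]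

/-- `H_b = C_bᴴ G C_b`, the Gram matrix of multiplication by `(λ - b)`. -/
def Hm (n p : ℕ) (G : Matrix (Idx n p) (Idx n p) ℂ) (b : ℂ) :
    Matrix (Fin n × Fin p) (Fin n × Fin p) ℂ :=
  (Cm n p b)ᴴ * G * Cm n p b

lemma Hm_apply (G : Matrix (Idx n p) (Idx n p) ℂ) (i j : Fin n) (a c : Fin p) :
    Hm n p G b (i, a) (j, c)
      = (G (i.succ, a) (j.succ, c) - b * G (i.succ, a) (j.castSucc, c))
        - (starRingEnd ℂ) b *
          (G (i.castSucc, a) (j.succ, c) - b * G (i.castSucc, a) (j.castSucc, c)) := by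
  have h1 : Hm n p G b = (Cm n p b)ᴴ * (G * Cm n p b) := by
    rw [Hm, Matrix.mul_assoc]
  rw [h1, CmT_mul_apply, mul_Cm_apply, mul_Cm_apply]

lemma hankel_iff_Hm (G : Matrix (Idx n p) (Idx n p) ℂ) {α : ℂ} (hα : (starRingEnd ℂ) α ≠ α) :
    BlockHankel n p G ↔ Hm n p G α = Hm n p G ((starRingEnd ℂ) α) := by
  constructor
  · intro h
    ext ⟨i, a⟩ ⟨j, c⟩
    rw [Hm_apply, Hm_apply, h i j a c]
    simp only [RingHomCompTriple.comp_apply, RingHom.id_apply, Complex.conj_conj]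
    ring
  · intro h i j a c
    have := congrFun (congrFun h (i, a)) (j, c)
    rw [Hm_apply, Hm_apply] at this
    simp only [Complex.conj_conj] at this
    have h2 : ((starRingEnd ℂ) α - α) * (G (i.succ, a) (j.castSucc, c)
        - G (i.castSucc, a) (j.succ, c)) = 0 := by
      ring_nf
      ring_nf at this
      linear_combination this
    rcases mul_eq_zero.mp h2 with h3 | h3
    · exact absurd (sub_eq_zero.mp h3) hα
    · exact sub_eq_zero.mp h3

lemma posdef_sandwich {X : Type*} [Fintype X] [DecidableEq X]
    {A : Matrix (Idx n p) (Idx n p) ℂ} (hA : A.PosDef) (B : Matrix (Idx n p) X ℂ)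
    (hB : ∀ x : X → ℂ, x ≠ 0 → B *ᵥ x ≠ 0) : (Bᴴ * A * B).PosDef := by
  refine Matrix.PosDef.of_dotProduct_mulVec_pos ?_ ?_
  · exact Matrix.isHermitian_conjTranspose_mul_mul B hA.1
  · intro x hx
    simpa only [star_mulVec, Matrix.dotProduct_mulVec, vecMul_vecMul] using
      hA.dotProduct_mulVec_pos (hB x hx)

variable {G : Matrix (Idx n p) (Idx n p) ℂ}

lemma Hm_posdef (hG : G.PosDef) : (Hm n p G b).PosDef := by
  apply posdef_sandwich hG
  intro x hx h0
  apply hx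
  have : Dm n p b *ᵥ (Cm n p b *ᵥ x) = x := by
    rw [Matrix.mulVec_mulVec, Dm_mul_Cm, Matrix.one_mulVec]
  rw [h0, Matrix.mulVec_zero] at this
  exact this.symm

lemma Fm_conjT_mulVec_ne (x : Fin p → ℂ) (hx : x ≠ 0) :
    (Fm n p b)ᴴ *ᵥ x ≠ 0 := by
  intro h0
  apply hx
  funext c
  have h1 : ((Fm n p b)ᴴ *ᵥ x) ((0 : Fin (n+1)), c) = x c := by
    rw [Matrix.mulVec]
    simp only [Matrix.conjTranspose_apply, Fm, Matrix.of_apply, dotProduct]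
    rw [Finset.sum_eq_single c]
    · simp
    · intro d _ hd
      simp [Ne.symm hd]
    · intro h; exact absurd (Finset.mem_univ _) h
  rw [h0] at h1
  exact h1.symm

lemma Delta_posdef (hG : G.PosDef) :
    (Fm n p b * G⁻¹ * (Fm n p b)ᴴ).PosDef := by
  have h1 : Fm n p b * G⁻¹ * (Fm n p b)ᴴ = ((Fm n p b)ᴴ)ᴴ * G⁻¹ * (Fm n p b)ᴴ := by
    rw [Matrix.conjTranspose_conjTranspose]
  rw [h1]
  exact posdef_sandwich hG.inv _ (Fm_conjT_mulVec_ne b)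


lemma Nm_eq (hG : G.PosDef) :
    Nm n p G b = Cm n p b * (Hm n p G b)⁻¹ * (Cm n p b)ᴴ := by
  have hGdet : IsUnit G.det := (Matrix.isUnit_iff_isUnit_det G).mp hG.isUnit
  have hGΓ : G * G⁻¹ = 1 := Matrix.mul_nonsing_inv G hGdet
  have hΔ : (Fm n p b * G⁻¹ * (Fm n p b)ᴴ).PosDef := Delta_posdef b hG
  have hΔdet : IsUnit (Fm n p b * G⁻¹ * (Fm n p b)ᴴ).det :=
    (Matrix.isUnit_iff_isUnit_det _).mp hΔ.isUnit
  have hΔi : (Fm n p b * G⁻¹ * (Fm n p b)ᴴ) * (Fm n p b * G⁻¹ * (Fm n p b)ᴴ)⁻¹ = 1 :=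
    Matrix.mul_nonsing_inv _ hΔdet
  have hH : (Hm n p G b).PosDef := Hm_posdef b hG
  have hHdet : IsUnit (Hm n p G b).det := (Matrix.isUnit_iff_isUnit_det _).mp hH.isUnit
  have hHi : (Hm n p G b)⁻¹ * Hm n p G b = 1 := Matrix.nonsing_inv_mul _ hHdet
  have hHi' : Hm n p G b * (Hm n p G b)⁻¹ = 1 := Matrix.mul_nonsing_inv _ hHdet
  have hFC : Fm n p b * Cm n p b = 0 := by
    rw [Fm_mul_Cm]; simp
  set X := Nm n p G b - Cm n p b * (Hm n p G b)⁻¹ * (Cm n p b)ᴴ with hX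
  have hFN : Fm n p b * Nm n p G b = 0 := by
    rw [Nm, Matrix.mul_sub]
    rw [show Fm n p b * (G⁻¹ * (Fm n p b)ᴴ * (Fm n p b * G⁻¹ * (Fm n p b)ᴴ)⁻¹ * Fm n p b * G⁻¹)
        = (Fm n p b * G⁻¹ * (Fm n p b)ᴴ) * (Fm n p b * G⁻¹ * (Fm n p b)ᴴ)⁻¹ * (Fm n p b * G⁻¹) by
      simp only [Matrix.mul_assoc]]
    rw [hΔi, Matrix.one_mul, sub_self]
  have hFX : Fm n p b * X = 0 := by
    rw [hX, Matrix.mul_sub, hFN]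
    rw [show Fm n p b * (Cm n p b * (Hm n p G b)⁻¹ * (Cm n p b)ᴴ)
        = (Fm n p b * Cm n p b) * ((Hm n p G b)⁻¹ * (Cm n p b)ᴴ) by simp only [Matrix.mul_assoc]]
    rw [hFC]
    simp
  have hGX : (Cm n p b)ᴴ * (G * X) = 0 := by
    rw [hX, Matrix.mul_sub, Matrix.mul_sub]
    have e1 : (Cm n p b)ᴴ * (G * Nm n p G b) = (Cm n p b)ᴴ := by
      rw [Nm, Matrix.mul_sub, Matrix.mul_sub]
      rw [show G * (G⁻¹ * (Fm n p b)ᴴ * (Fm n p b * G⁻¹ * (Fm n p b)ᴴ)⁻¹ * Fm n p b * G⁻¹)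
          = (G * G⁻¹) * ((Fm n p b)ᴴ * ((Fm n p b * G⁻¹ * (Fm n p b)ᴴ)⁻¹ * (Fm n p b * G⁻¹))) by
        simp only [Matrix.mul_assoc]]
      rw [hGΓ, Matrix.one_mul]
      rw [show (Cm n p b)ᴴ * ((Fm n p b)ᴴ * ((Fm n p b * G⁻¹ * (Fm n p b)ᴴ)⁻¹ * (Fm n p b * G⁻¹)))
          = (Fm n p b * Cm n p b)ᴴ * ((Fm n p b * G⁻¹ * (Fm n p b)ᴴ)⁻¹ * (Fm n p b * G⁻¹)) by
        rw [Matrix.conjTranspose_mul]; simp only [Matrix.mul_assoc]]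
      rw [hFC]
      simp
    have e2 : (Cm n p b)ᴴ * (G * (Cm n p b * (Hm n p G b)⁻¹ * (Cm n p b)ᴴ)) = (Cm n p b)ᴴ := by
      rw [show (Cm n p b)ᴴ * (G * (Cm n p b * (Hm n p G b)⁻¹ * (Cm n p b)ᴴ))
          = ((Cm n p b)ᴴ * G * Cm n p b) * (Hm n p G b)⁻¹ * (Cm n p b)ᴴ by
        simp only [Matrix.mul_assoc]]
      rw [show (Cm n p b)ᴴ * G * Cm n p b = Hm n p G b from rfl, hHi', Matrix.one_mul]
    rw [e1, e2, sub_self]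
  have hXC : X = Cm n p b * (Dm n p b * X) := by
    have h1 : (1 : Matrix (Idx n p) (Idx n p) ℂ) = Cm n p b * Dm n p b + Ek n p 0 * Fm n p b := by
      rw [Cm_mul_Dm, sub_add_cancel]
    calc X = 1 * X := (Matrix.one_mul X).symm
    _ = Cm n p b * (Dm n p b * X) + Ek n p 0 * (Fm n p b * X) := by
        rw [h1, Matrix.add_mul]; simp only [Matrix.mul_assoc]
    _ = Cm n p b * (Dm n p b * X) := by rw [hFX, Matrix.mul_zero, add_zero]
  have hDX : Dm n p b * X = 0 := by
    have h2 : Hm n p G b * (Dm n p b * X) = 0 := by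
      have h3 : (Cm n p b)ᴴ * (G * (Cm n p b * (Dm n p b * X))) = 0 := by rw [← hXC]; exact hGX
      rw [show (Cm n p b)ᴴ * (G * (Cm n p b * (Dm n p b * X)))
          = ((Cm n p b)ᴴ * G * Cm n p b) * (Dm n p b * X) by simp only [Matrix.mul_assoc]] at h3
      exact h3
    calc Dm n p b * X = ((Hm n p G b)⁻¹ * Hm n p G b) * (Dm n p b * X) := by
          rw [hHi, Matrix.one_mul]
    _ = (Hm n p G b)⁻¹ * (Hm n p G b * (Dm n p b * X)) := by simp only [Matrix.mul_assoc]
    _ = 0 := by rw [h2, Matrix.mul_zero]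
  have h4 : X = 0 := by rw [hXC, hDX, Matrix.mul_zero]
  rw [hX] at h4
  exact sub_eq_zero.mp h4

lemma kernel_formula (hG : G.PosDef) (om : ℂ) :
    Fm n p lam * Nm n p G b * (Fm n p om)ᴴ
      = ((lam - b) * (starRingEnd ℂ) (om - b))
          • (Fs n p lam * (Hm n p G b)⁻¹ * (Fs n p om)ᴴ) := by
  rw [Nm_eq b hG]
  have h1 : Fm n p lam * (Cm n p b * (Hm n p G b)⁻¹ * (Cm n p b)ᴴ) * (Fm n p om)ᴴ
      = (Fm n p lam * Cm n p b) * ((Hm n p G b)⁻¹ * (Fm n p om * Cm n p b)ᴴ) := by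
    rw [Matrix.conjTranspose_mul]
    simp only [Matrix.mul_assoc]
  rw [h1, Fm_mul_Cm, Fm_mul_Cm]
  rw [Matrix.conjTranspose_smul]
  rw [Matrix.smul_mul, Matrix.mul_smul, Matrix.mul_smul, smul_smul, Matrix.mul_assoc]
  norm_num [star_def]

lemma sandwich_apply (Y : Matrix (Fin n × Fin p) (Fin n × Fin p) ℂ) (mu : ℂ) (a c : Fin p) :
    (Fs n p lam * Y * (Fs n p mu)ᴴ) a c
      = ∑ j : Fin n, ∑ k : Fin n,
          (lam ^ (j : ℕ) * (starRingEnd ℂ) (mu ^ (k : ℕ))) * Y (j, a) (k, c) := by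
  have inner : ∀ z : Fin n × Fin p,
      (Fs n p lam * Y) a z = ∑ j : Fin n, lam ^ (j : ℕ) * Y (j, a) z := by
    intro z
    rw [Matrix.mul_apply, Fintype.sum_prod_type]
    apply Finset.sum_congr rfl
    intro j _
    rw [Finset.sum_eq_single a]
    · simp [Fs]
    · intro d _ hd
      simp [Fs, hd]
    · intro h; exact absurd (Finset.mem_univ _) h
  calc (Fs n p lam * Y * (Fs n p mu)ᴴ) a c
      = ∑ k : Fin n, ∑ j : Fin n,
          (lam ^ (j : ℕ) * (starRingEnd ℂ) (mu ^ (k : ℕ))) * Y (j, a) (k, c) := by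
        rw [Matrix.mul_apply, Fintype.sum_prod_type]
        apply Finset.sum_congr rfl
        intro k _
        rw [Finset.sum_eq_single c]
        · rw [inner, Finset.sum_mul]
          apply Finset.sum_congr rfl
          intro j _
          rw [Matrix.conjTranspose_apply]
          simp only [Fs, Matrix.of_apply, if_pos rfl, RingHom.map_mul, star_def, if_true,
            _root_.map_one]
          ring
        · intro e _ he
          rw [Matrix.conjTranspose_apply]
          simp [Fs, he]
        · intro h; exact absurd (Finset.mem_univ _) h
    _ = _ := Finset.sum_comm

lemma poly_aux {N : ℕ} (f : Fin N → ℂ) {S : Set ℂ} (hS : S.Infinite)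
    (h : ∀ z ∈ S, ∑ j : Fin N, f j * z ^ (j : ℕ) = 0) (j : Fin N) : f j = 0 := by
  have hP : (∑ i : Fin N, Polynomial.C (f i) * Polynomial.X ^ (i : ℕ)) = 0 := by
    apply Polynomial.eq_zero_of_infinite_isRoot
    apply Set.Infinite.mono ?_ hS
    intro z hz
    simp only [Set.mem_setOf_eq, Polynomial.IsRoot, Polynomial.eval_finset_sum,
      Polynomial.eval_mul, Polynomial.eval_C, Polynomial.eval_pow, Polynomial.eval_X]
    exact h z hz
  have hc := congrArg (fun q => Polynomial.coeff q (j : ℕ)) hP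
  simp only [Polynomial.finset_sum_coeff, Polynomial.coeff_C_mul, Polynomial.coeff_X_pow,
    Polynomial.coeff_zero] at hc
  rw [Finset.sum_eq_single j] at hc
  · simpa using hc
  · intro i _ hij
    have h2 : ¬((j : ℕ) = (i : ℕ)) := fun h' => hij (Fin.ext h'.symm)
    simp [h2]
  · intro h'; exact absurd (Finset.mem_univ _) h'

lemma good_set_infinite (α : ℂ) : ({z : ℂ | z ≠ α ∧ z ≠ (starRingEnd ℂ) α}).Infinite := by
  have h1 : ({z : ℂ | z ≠ α ∧ z ≠ (starRingEnd ℂ) α})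
      = (({α, (starRingEnd ℂ) α} : Set ℂ))ᶜ := by
    ext z
    simp [not_or]
  rw [h1]
  exact Set.Finite.infinite_compl (Set.toFinite _)

theorem stmt6 (p n : ℕ) (hp : 0 < p) (hn : 0 < n)
    (G : Matrix (Idx n p) (Idx n p) ℂ) (hG : G.PosDef) (α : ℂ) (hα : α.im ≠ 0) :
    BlockHankel n p G ↔
      ∀ lam om : ℂ,
        ((lam - conj α) * (conj om - α)) • (Fm n p lam * Nm n p G α * (Fm n p om)ᴴ) =
          ((lam - α) * (conj om - conj α)) • (Fm n p lam * Nm n p G (conj α) * (Fm n p om)ᴴ) := by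
  have hconj : (starRingEnd ℂ) α ≠ α := fun h => hα (Complex.conj_eq_iff_im.mp h)
  constructor
  · intro hHank lam om
    have hEq := (hankel_iff_Hm G hconj).mp hHank
    rw [kernel_formula α lam hG om, kernel_formula ((starRingEnd ℂ) α) lam hG om, hEq,
      smul_smul, smul_smul]
    congr 1
    simp only [map_sub, Complex.conj_conj]
    ring
  · intro h
    apply (hankel_iff_Hm G hconj).mpr
    have hHα : IsUnit (Hm n p G α).det :=
      (Matrix.isUnit_iff_isUnit_det _).mp (Hm_posdef α hG).isUnit
    have hHᾱ : IsUnit (Hm n p G ((starRingEnd ℂ) α)).det :=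
      (Matrix.isUnit_iff_isUnit_det _).mp (Hm_posdef ((starRingEnd ℂ) α) hG).isUnit
    have hXd : ∀ (j k : Fin n) (a c : Fin p),
        ((Hm n p G α)⁻¹ - (Hm n p G ((starRingEnd ℂ) α))⁻¹) (j, a) (k, c) = 0 := by
      intro j k a c
      have hmain : ∀ ν ∈ {z : ℂ | z ≠ α ∧ z ≠ (starRingEnd ℂ) α},
          ∀ lam ∈ {z : ℂ | z ≠ α ∧ z ≠ (starRingEnd ℂ) α},
          ∑ j' : Fin n, (∑ k' : Fin n,
            ((Hm n p G α)⁻¹ - (Hm n p G ((starRingEnd ℂ) α))⁻¹) (j', a) (k', c) * ν ^ (k' : ℕ))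
              * lam ^ (j' : ℕ) = 0 := by
        intro ν hν lam hlam
        have hc := h lam ((starRingEnd ℂ) ν)
        rw [kernel_formula α lam hG ((starRingEnd ℂ) ν),
          kernel_formula ((starRingEnd ℂ) α) lam hG ((starRingEnd ℂ) ν),
          smul_smul, smul_smul] at hc
        set s : ℂ := (lam - α) * (lam - (starRingEnd ℂ) α) * ((ν - α) * (ν - (starRingEnd ℂ) α))
          with hs
        have e1 : (lam - (starRingEnd ℂ) α) * ((starRingEnd ℂ) ((starRingEnd ℂ) ν) - α)
            * ((lam - α) * (starRingEnd ℂ) ((starRingEnd ℂ) ν - α)) = s := by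
          simp only [map_sub, Complex.conj_conj, hs]
          ring
        have e2 : (lam - α) * ((starRingEnd ℂ) ((starRingEnd ℂ) ν) - (starRingEnd ℂ) α)
            * ((lam - (starRingEnd ℂ) α)
              * (starRingEnd ℂ) ((starRingEnd ℂ) ν - (starRingEnd ℂ) α)) = s := by
          simp only [map_sub, Complex.conj_conj, hs]
          ring
        rw [e1, e2] at hc
        have hs0 : s ≠ 0 := by
          apply mul_ne_zero (mul_ne_zero (sub_ne_zero.mpr hlam.1) (sub_ne_zero.mpr hlam.2))
          exact mul_ne_zero (sub_ne_zero.mpr hν.1) (sub_ne_zero.mpr hν.2)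
        have hzeroM : Fs n p lam * ((Hm n p G α)⁻¹ - (Hm n p G ((starRingEnd ℂ) α))⁻¹)
            * (Fs n p ((starRingEnd ℂ) ν))ᴴ = 0 := by
          have h5 : s • (Fs n p lam * ((Hm n p G α)⁻¹ - (Hm n p G ((starRingEnd ℂ) α))⁻¹)
              * (Fs n p ((starRingEnd ℂ) ν))ᴴ) = 0 := by
            rw [Matrix.mul_sub, Matrix.sub_mul, smul_sub, sub_eq_zero]
            exact hc
          rcases smul_eq_zero.mp h5 with h6 | h6
          · exact absurd h6 hs0
          · exact h6
        have hent := congrFun (congrFun hzeroM a) c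
        rw [sandwich_apply] at hent
        calc ∑ j' : Fin n, (∑ k' : Fin n,
              ((Hm n p G α)⁻¹ - (Hm n p G ((starRingEnd ℂ) α))⁻¹) (j', a) (k', c) * ν ^ (k' : ℕ))
                * lam ^ (j' : ℕ)
            = ∑ j' : Fin n, ∑ k' : Fin n,
                (lam ^ (j' : ℕ) * (starRingEnd ℂ) (((starRingEnd ℂ) ν) ^ (k' : ℕ)))
                  * ((Hm n p G α)⁻¹ - (Hm n p G ((starRingEnd ℂ) α))⁻¹) (j', a) (k', c) := by
              apply Finset.sum_congr rfl
              intro j' _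
              rw [Finset.sum_mul]
              apply Finset.sum_congr rfl
              intro k' _
              rw [map_pow, Complex.conj_conj]
              ring
          _ = 0 := by
              rw [hent]
              rfl
      have hstep : ∀ ν ∈ {z : ℂ | z ≠ α ∧ z ≠ (starRingEnd ℂ) α},
          ∑ k' : Fin n, ((Hm n p G α)⁻¹ - (Hm n p G ((starRingEnd ℂ) α))⁻¹) (j, a) (k', c)
            * ν ^ (k' : ℕ) = 0 := by
        intro ν hν
        exact poly_aux _ (good_set_infinite α) (hmain ν hν) j
      exact poly_aux _ (good_set_infinite α) hstep k
    have hinv : (Hm n p G α)⁻¹ = (Hm n p G ((starRingEnd ℂ) α))⁻¹ := by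
      ext ⟨j, a⟩ ⟨k, c⟩
      have h7 := hXd j k a c
      rw [Matrix.sub_apply] at h7
      exact sub_eq_zero.mp h7
    calc Hm n p G α = ((Hm n p G α)⁻¹)⁻¹ := (Matrix.nonsing_inv_nonsing_inv _ hHα).symm
      _ = ((Hm n p G ((starRingEnd ℂ) α))⁻¹)⁻¹ := by rw [hinv]
      _ = Hm n p G ((starRingEnd ℂ) α) := Matrix.nonsing_inv_nonsing_inv _ hHᾱ


end lems
end
end

section
/- (Gohberg–Heinig formula.) If G is block Toeplitz, then Γ = Σ_{j=0}^{n} A^j ( Γe_n(e_n*Γe_n)^{-1}e_n*Γ − A·Γe₀(e₀*Γe₀)^{-1}e₀*Γ·A* ) (A*)^j. -/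
open Matrix Complex
open scoped ComplexConjugate ComplexOrder

noncomputable section

/-- `G` is block Toeplitz: `g_{i+1,j+1} = g_{ij}` for `0 ≤ i,j ≤ n−1`. -/
def BlockToeplitz (n p : ℕ) (G : Matrix (Idx n p) (Idx n p) ℂ) : Prop :=
  ∀ (i j : Fin n) (a b : Fin p),
    G (i.succ, a) (j.succ, b) = G (i.castSucc, a) (j.castSucc, b)

variable (n p : ℕ)

lemma EkH_Ek (k : Fin (n+1)) : (Ek n p k)ᴴ * Ek n p k = 1 := by
  ext a b
  simp [Ek, Matrix.mul_apply, conjTranspose_apply, Fintype.sum_prod_type, ite_and,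
    Matrix.one_apply, apply_ite, eq_comm]

section helpers
variable {R C : Type*} [Fintype R] [Fintype C] [DecidableEq C]

lemma mul_Am_succ (M : Matrix R (Idx n p) ℂ) (x : R) (i : Fin n) (b : Fin p) :
    (M * Am n p) x (i.succ, b) = M x (i.castSucc, b) := by
  rw [Matrix.mul_apply, Fintype.sum_prod_type]
  rw [Finset.sum_eq_single i.castSucc]
  · rw [Finset.sum_eq_single b]
    · simp [Am]
    · intro c _ hc; simp [Am, hc]
    · simp
  · intro k _ hk
    have h2 : ¬ ((i : ℕ) = (k:ℕ)) := fun h => hk (Fin.val_injective h.symm)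
    simp [Am, h2]
  · simp

lemma mul_Am_zero (M : Matrix R (Idx n p) ℂ) (x : R) (b : Fin p) :
    (M * Am n p) x ((0 : Fin (n+1)), b) = 0 := by
  rw [Matrix.mul_apply]
  apply Finset.sum_eq_zero
  rintro ⟨k, c⟩ _
  simp [Am]

lemma Am_mul_castSucc (M : Matrix (Idx n p) C ℂ) (i : Fin n) (a : Fin p) (y : C) :
    (Am n p * M) (i.castSucc, a) y = M (i.succ, a) y := by
  rw [Matrix.mul_apply, Fintype.sum_prod_type]
  rw [Finset.sum_eq_single i.succ]
  · rw [Finset.sum_eq_single a]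
    · simp [Am]
    · intro c _ hc; simp [Am, Ne.symm hc]
    · simp
  · intro k _ hk
    have h2 : ¬ ((k : ℕ) = (i:ℕ) + 1) := fun h => hk (Fin.val_injective h)
    simp [Am, h2]
  · simp

lemma Am_mul_last (M : Matrix (Idx n p) C ℂ) (a : Fin p) (y : C) :
    (Am n p * M) (Fin.last n, a) y = 0 := by
  rw [Matrix.mul_apply]
  apply Finset.sum_eq_zero
  rintro ⟨k, c⟩ _
  have h2 : ¬ ((k : ℕ) = n + 1) := by have := k.isLt; omega
  simp [Am, h2]

lemma EkH_mul (k : Fin (n+1)) (M : Matrix (Idx n p) C ℂ) (a : Fin p) (y : C) :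
    ((Ek n p k)ᴴ * M) a y = M (k, a) y := by
  rw [Matrix.mul_apply, Fintype.sum_prod_type]
  rw [Finset.sum_eq_single k]
  · rw [Finset.sum_eq_single a]
    · simp [Ek]
    · intro c _ hc; simp [Ek, hc]
    · simp
  · intro j _ hj; simp [Ek, hj]
  · simp

lemma mul_Ek (k : Fin (n+1)) (M : Matrix R (Idx n p) ℂ) (x : R) (a : Fin p) :
    (M * Ek n p k) x a = M x (k, a) := by
  rw [Matrix.mul_apply, Fintype.sum_prod_type]
  rw [Finset.sum_eq_single k]
  · rw [Finset.sum_eq_single a]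
    · simp [Ek]
    · intro c _ hc; simp [Ek, hc]
    · simp
  · intro j _ hj; simp [Ek, hj]
  · simp

end helpers

lemma Ek_mul_EkH (k : Fin (n+1)) (x y : Idx n p) :
    (Ek n p k * (Ek n p k)ᴴ) x y = if x.1 = k ∧ y.1 = k ∧ x.2 = y.2 then 1 else 0 := by
  rw [Matrix.mul_apply, Finset.sum_eq_single x.2]
  · by_cases h1 : x.1 = k <;> by_cases h2 : y.1 = k <;> by_cases h3 : x.2 = y.2 <;>
      simp_all [Ek, conjTranspose_apply, eq_comm]
  · intro c _ hc; simp [Ek, conjTranspose_apply, hc, Ne.symm hc]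
  · simp

lemma Am_mul_Ek_zero : Am n p * Ek n p 0 = 0 := by
  ext ⟨i, a⟩ b
  induction i using Fin.lastCases with
  | last => rw [Am_mul_last]; rfl
  | cast i =>
    rw [Am_mul_castSucc]
    simp [Ek, Fin.succ_ne_zero]

lemma EkH_last_mul_Am : (Ek n p (Fin.last n))ᴴ * Am n p = 0 := by
  ext a ⟨j, b⟩
  induction j using Fin.cases with
  | zero => rw [mul_Am_zero]; rfl
  | succ i =>
    rw [mul_Am_succ]
    simp [Ek, conjTranspose_apply, (Fin.castSucc_lt_last i).ne]

lemma Am_mul_AmH : Am n p * (Am n p)ᴴ = 1 - Ek n p (Fin.last n) * (Ek n p (Fin.last n))ᴴ := by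
  ext ⟨i, a⟩ ⟨j, b⟩
  have hrhs : ((1 - Ek n p (Fin.last n) * (Ek n p (Fin.last n))ᴴ : Matrix (Idx n p) (Idx n p) ℂ)) (i, a) (j, b)
      = (if ((i,a) : Idx n p) = (j,b) then 1 else 0)
        - (if i = Fin.last n ∧ j = Fin.last n ∧ a = b then 1 else 0) := by
    rw [Matrix.sub_apply, Matrix.one_apply, Ek_mul_EkH]
  rw [hrhs]
  induction i using Fin.lastCases with
  | last =>
    rw [Am_mul_last]
    by_cases hj : j = Fin.last n
    · subst hj
      by_cases hab : a = b <;> simp [Prod.ext_iff, hab]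
    · simp [Prod.ext_iff, hj, Ne.symm hj]
  | cast i =>
    rw [Am_mul_castSucc]
    have hne : i.castSucc ≠ Fin.last n := (Fin.castSucc_lt_last i).ne
    simp only [conjTranspose_apply, Am, Matrix.of_apply]
    by_cases hj : j = i.castSucc
    · subst hj
      by_cases hab : a = b <;>
        simp [Prod.ext_iff, hab, hne, Fin.val_succ, eq_comm]
    · have h3 : ¬ ((i : ℕ) = (j : ℕ)) := fun h => hj (Fin.val_injective h.symm)
      simp [Prod.ext_iff, hj, Ne.symm hj, h3, hne]

lemma AmH_mul_Am : (Am n p)ᴴ * Am n p = 1 - Ek n p 0 * (Ek n p 0)ᴴ := by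
  ext ⟨i, a⟩ ⟨j, b⟩
  have hrhs : ((1 - Ek n p 0 * (Ek n p 0)ᴴ : Matrix (Idx n p) (Idx n p) ℂ)) (i, a) (j, b)
      = (if ((i,a) : Idx n p) = (j,b) then 1 else 0)
        - (if i = 0 ∧ j = 0 ∧ a = b then 1 else 0) := by
    rw [Matrix.sub_apply, Matrix.one_apply, Ek_mul_EkH]
  rw [hrhs]
  induction j using Fin.cases with
  | zero =>
    rw [mul_Am_zero]
    by_cases hi : i = 0
    · subst hi
      by_cases hab : a = b <;> simp [Prod.ext_iff, hab]
    · simp [Prod.ext_iff, hi]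
  | succ k =>
    rw [mul_Am_succ]
    have hne : (k.succ : Fin (n+1)) ≠ 0 := Fin.succ_ne_zero k
    simp only [conjTranspose_apply, Am, Matrix.of_apply]
    by_cases hi : i = k.succ
    · subst hi
      by_cases hab : a = b <;>
        simp [Prod.ext_iff, hab, hne, Fin.val_succ, eq_comm]
    · have h3 : ¬ ((i : ℕ) = (k : ℕ) + 1) := fun h => hi (Fin.val_injective h)
      simp [Prod.ext_iff, hi, h3, hne]

section helpers2
variable {R C : Type*} [Fintype R] [Fintype C] [DecidableEq C]

lemma Ek_mul_EkH_mul (k : Fin (n+1)) (M : Matrix (Idx n p) C ℂ) (x : Idx n p) (y : C) :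
    (Ek n p k * ((Ek n p k)ᴴ * M)) x y = if x.1 = k then M (k, x.2) y else 0 := by
  rw [Matrix.mul_apply, Finset.sum_eq_single x.2]
  · rw [EkH_mul]; by_cases h : x.1 = k <;> simp [Ek, h]
  · intro c _ hc; simp [Ek, Ne.symm hc]
  · simp

lemma mul_Ek_mul_EkH (k : Fin (n+1)) (M : Matrix R (Idx n p) ℂ) (x : R) (y : Idx n p) :
    (M * (Ek n p k * (Ek n p k)ᴴ)) x y = if y.1 = k then M x (k, y.2) else 0 := by
  rw [Matrix.mul_apply, Fintype.sum_prod_type, Finset.sum_eq_single k]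
  · rw [Finset.sum_eq_single y.2]
    · rw [Ek_mul_EkH]
      by_cases h : y.1 = k <;> simp [h]
    · intro c _ hc; rw [Ek_mul_EkH]; simp [hc, Ne.symm hc]
    · simp
  · intro j _ hj
    apply Finset.sum_eq_zero
    intro c _
    rw [Ek_mul_EkH]; simp [hj]
  · simp

end helpers2

lemma toeplitz_key (G : Matrix (Idx n p) (Idx n p) ℂ)
    (hT : ∀ (i j : Fin n) (a b : Fin p),
      G (i.succ, a) (j.succ, b) = G (i.castSucc, a) (j.castSucc, b)) :
    (1 - Ek n p (Fin.last n) * (Ek n p (Fin.last n))ᴴ) * (G * Am n p)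
      = Am n p * G * (1 - Ek n p 0 * (Ek n p 0)ᴴ) := by
  rw [Matrix.sub_mul, Matrix.one_mul, Matrix.mul_assoc (Ek n p (Fin.last n)),
    Matrix.mul_sub, Matrix.mul_one]
  ext ⟨i, a⟩ ⟨j, b⟩
  rw [Matrix.sub_apply, Matrix.sub_apply, Ek_mul_EkH_mul, mul_Ek_mul_EkH]
  induction i using Fin.lastCases with
  | last =>
    rw [if_pos rfl, Am_mul_last, sub_self]
    induction j using Fin.cases with
    | zero => rw [if_pos rfl, Am_mul_last, sub_self]
    | succ k => rw [if_neg (Fin.succ_ne_zero k), sub_zero]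
  | cast i =>
    rw [if_neg (Fin.castSucc_lt_last i).ne, sub_zero]
    induction j using Fin.cases with
    | zero =>
      rw [mul_Am_zero, if_pos rfl, Am_mul_castSucc, sub_self]
    | succ k =>
      rw [mul_Am_succ, if_neg (Fin.succ_ne_zero k), sub_zero, Am_mul_castSucc]
      exact (hT i k a b).symm

lemma Am_pow_apply (k : ℕ) (x y : Idx n p) :
    (Am n p ^ k) x y = if (y.1 : ℕ) = (x.1 : ℕ) + k ∧ x.2 = y.2 then 1 else 0 := by
  induction k generalizing y with
  | zero =>
    rcases x with ⟨i, a⟩; rcases y with ⟨j, b⟩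
    rw [pow_zero]
    by_cases h : i = j
    · subst h
      by_cases hab : a = b <;> simp [Matrix.one_apply, Prod.ext_iff, hab]
    · have : ¬ ((j : ℕ) = (i : ℕ)) := fun hh => h (Fin.val_injective hh.symm)
      simp [Matrix.one_apply, Prod.ext_iff, h, this]
  | succ k ih =>
    rw [pow_succ]
    rcases y with ⟨j, b⟩
    induction j using Fin.cases with
    | zero =>
      rw [mul_Am_zero]
      have h0 : ¬ ((0:ℕ) = (x.1:ℕ) + (k+1)) := by omega
      simp [h0]
    | succ m =>
      rw [mul_Am_succ, ih]
      have : ((m.succ : Fin (n+1)) : ℕ) = (m : ℕ) + 1 := rfl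
      rw [this]
      by_cases hc : (m : ℕ) = (x.1 : ℕ) + k
      · simp [hc, show (x.1:ℕ)+k+1 = (x.1:ℕ)+(k+1) by omega]
      · have : ¬ ((m : ℕ) + 1 = (x.1 : ℕ) + (k + 1)) := by omega
        simp [hc, this]

lemma Am_pow_nilpotent : Am n p ^ (n + 1) = 0 := by
  ext x y
  rw [Am_pow_apply]
  have : ¬ ((y.1 : ℕ) = (x.1 : ℕ) + (n + 1)) := by
    have := y.1.isLt; omega
  simp [this]

lemma sub_block_posDef {Γ : Matrix (Idx n p) (Idx n p) ℂ} (hΓ : Γ.PosDef) (k : Fin (n+1)) :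
    ((Ek n p k)ᴴ * Γ * Ek n p k).PosDef := by
  refine Matrix.posDef_iff_dotProduct_mulVec.mpr ⟨?_, ?_⟩
  · have : ((Ek n p k)ᴴ * Γ * Ek n p k)ᴴ = (Ek n p k)ᴴ * Γᴴ * Ek n p k := by
      simp [Matrix.conjTranspose_mul, Matrix.mul_assoc]
    rw [Matrix.IsHermitian, this, hΓ.1.eq]
  · intro x hx
    have hEx : Ek n p k *ᵥ x ≠ 0 := by
      intro h
      apply hx
      have : (Ek n p k)ᴴ *ᵥ (Ek n p k *ᵥ x) = x := by
        rw [Matrix.mulVec_mulVec, EkH_Ek, Matrix.one_mulVec]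
      rw [h, Matrix.mulVec_zero] at this
      exact this.symm
    have := hΓ.dotProduct_mulVec_pos hEx
    have heq : star x ⬝ᵥ ((Ek n p k)ᴴ * Γ * Ek n p k) *ᵥ x
        = star (Ek n p k *ᵥ x) ⬝ᵥ Γ *ᵥ (Ek n p k *ᵥ x) := by
      rw [← Matrix.mulVec_mulVec, ← Matrix.mulVec_mulVec, Matrix.dotProduct_mulVec,
        Matrix.star_mulVec]
    rw [heq]
    exact this

theorem stmt10 (p n : ℕ) (hp : 0 < p) (hn : 0 < n)
    (G : Matrix (Idx n p) (Idx n p) ℂ) (hG : G.PosDef) (hT : BlockToeplitz n p G) :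
    G⁻¹ = ∑ j ∈ Finset.range (n + 1),
      Am n p ^ j *
        (G⁻¹ * Ek n p (Fin.last n) * ((Ek n p (Fin.last n))ᴴ * G⁻¹ * Ek n p (Fin.last n))⁻¹ *
            (Ek n p (Fin.last n))ᴴ * G⁻¹ -
          Am n p * (G⁻¹ * Ek n p 0 * ((Ek n p 0)ᴴ * G⁻¹ * Ek n p 0)⁻¹ * (Ek n p 0)ᴴ * G⁻¹) *
            (Am n p)ᴴ) *
        ((Am n p)ᴴ) ^ j := by
  classical
  set Γ := G⁻¹ with hΓdef
  set E := Ek n p (Fin.last n) with hEdef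
  set E0 := Ek n p 0 with hE0def
  set A := Am n p with hAdef
  have hGu : IsUnit G.det := (Matrix.isUnit_iff_isUnit_det G).mp hG.isUnit
  have hGΓ : G * Γ = 1 := Matrix.mul_nonsing_inv G hGu
  have hΓG : Γ * G = 1 := Matrix.nonsing_inv_mul G hGu
  have hΓpd : Γ.PosDef := hG.inv
  set c := Eᴴ * Γ * E with hcdef
  set c0 := E0ᴴ * Γ * E0 with hc0def
  have hcpd : c.PosDef := sub_block_posDef n p hΓpd (Fin.last n)
  have hc0pd : c0.PosDef := sub_block_posDef n p hΓpd 0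
  have hcu : IsUnit c.det := (Matrix.isUnit_iff_isUnit_det c).mp hcpd.isUnit
  have hc0u : IsUnit c0.det := (Matrix.isUnit_iff_isUnit_det c0).mp hc0pd.isUnit
  have hci : c * c⁻¹ = 1 := Matrix.mul_nonsing_inv c hcu
  have hci' : c⁻¹ * c = 1 := Matrix.nonsing_inv_mul c hcu
  have hc0i : c0 * c0⁻¹ = 1 := Matrix.mul_nonsing_inv c0 hc0u
  have hc0i' : c0⁻¹ * c0 = 1 := Matrix.nonsing_inv_mul c0 hc0u
  have hEHE : Eᴴ * E = 1 := EkH_Ek n p (Fin.last n)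
  have hE0HE0 : E0ᴴ * E0 = 1 := EkH_Ek n p 0
  set P := Γ * E * c⁻¹ * Eᴴ * Γ with hPdef
  set Q := Γ * E0 * c0⁻¹ * E0ᴴ * Γ with hQdef
  -- key computations
  have h1 : Eᴴ * (Γ - P) = 0 := by
    rw [Matrix.mul_sub, hPdef]
    have e : Eᴴ * (Γ * E * c⁻¹ * Eᴴ * Γ) = (Eᴴ * Γ * E) * (c⁻¹ * (Eᴴ * Γ)) := by
      simp only [Matrix.mul_assoc]
    rw [e, ← hcdef, ← Matrix.mul_assoc c, hci, Matrix.one_mul, sub_self]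
  have h0 : E0ᴴ * (Γ - Q) = 0 := by
    rw [Matrix.mul_sub, hQdef]
    have e : E0ᴴ * (Γ * E0 * c0⁻¹ * E0ᴴ * Γ) = (E0ᴴ * Γ * E0) * (c0⁻¹ * (E0ᴴ * Γ)) := by
      simp only [Matrix.mul_assoc]
    rw [e, ← hc0def, ← Matrix.mul_assoc c0, hc0i, Matrix.one_mul, sub_self]
  have hGP : G * (Γ - P) = 1 - E * (c⁻¹ * (Eᴴ * Γ)) := by
    rw [Matrix.mul_sub, hGΓ, hPdef]
    have e : G * (Γ * E * c⁻¹ * Eᴴ * Γ) = (G * Γ) * (E * (c⁻¹ * (Eᴴ * Γ))) := by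
      simp only [Matrix.mul_assoc]
    rw [e, hGΓ, Matrix.one_mul]
  have hGQ : G * (Γ - Q) = 1 - E0 * (c0⁻¹ * (E0ᴴ * Γ)) := by
    rw [Matrix.mul_sub, hGΓ, hQdef]
    have e : G * (Γ * E0 * c0⁻¹ * E0ᴴ * Γ) = (G * Γ) * (E0 * (c0⁻¹ * (E0ᴴ * Γ))) := by
      simp only [Matrix.mul_assoc]
    rw [e, hGΓ, Matrix.one_mul]
  -- Π G X = Π
  have h3 : (1 - E * Eᴴ) * (G * (Γ - P)) = 1 - E * Eᴴ := by
    rw [hGP, Matrix.sub_mul, Matrix.one_mul, Matrix.mul_sub, Matrix.mul_one]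
    have e : (E * Eᴴ) * (E * (c⁻¹ * (Eᴴ * Γ))) = E * ((Eᴴ * E) * (c⁻¹ * (Eᴴ * Γ))) := by
      simp only [Matrix.mul_assoc]
    rw [e, hEHE, Matrix.one_mul]
    abel
  -- Π G Y = Π
  have h4 : (1 - E * Eᴴ) * (G * (A * ((Γ - Q) * Aᴴ))) = 1 - E * Eᴴ := by
    have e1 : (1 - E * Eᴴ) * (G * (A * ((Γ - Q) * Aᴴ)))
        = ((1 - E * Eᴴ) * (G * A)) * ((Γ - Q) * Aᴴ) := by
      simp only [Matrix.mul_assoc]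
    rw [e1, hEdef, hAdef, toeplitz_key n p G hT, ← hAdef, ← hEdef, ← hE0def]
    have e2 : (A * G * (1 - E0 * E0ᴴ)) * ((Γ - Q) * Aᴴ)
        = A * (G * (((1 - E0 * E0ᴴ) * (Γ - Q)) * Aᴴ)) := by
      simp only [Matrix.mul_assoc]
    have e3 : (1 - E0 * E0ᴴ) * (Γ - Q) = Γ - Q := by
      rw [Matrix.sub_mul, Matrix.one_mul, Matrix.mul_assoc, h0, Matrix.mul_zero, sub_zero]
    rw [e2, e3]
    have e4 : G * ((Γ - Q) * Aᴴ) = (G * (Γ - Q)) * Aᴴ := by simp only [Matrix.mul_assoc]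
    rw [e4, hGQ, Matrix.sub_mul, Matrix.one_mul, Matrix.mul_sub]
    have e5 : A * ((E0 * (c0⁻¹ * (E0ᴴ * Γ))) * Aᴴ) = (A * E0) * ((c0⁻¹ * (E0ᴴ * Γ)) * Aᴴ) := by
      simp only [Matrix.mul_assoc]
    rw [e5, hAdef, hE0def, Am_mul_Ek_zero, Matrix.zero_mul, sub_zero, Am_mul_AmH, ← hEdef]
  -- set Z
  set Z := (Γ - P) - A * ((Γ - Q) * Aᴴ) with hZdef
  have hPiGZ : (1 - E * Eᴴ) * (G * Z) = 0 := by
    rw [hZdef, Matrix.mul_sub G, Matrix.mul_sub, h3, h4, sub_self]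
  have hGZ : G * Z = E * (Eᴴ * (G * Z)) := by
    have h := hPiGZ
    rw [Matrix.sub_mul, Matrix.one_mul, sub_eq_zero] at h
    conv_lhs => rw [h]
    simp only [Matrix.mul_assoc]
  have hEZ : Eᴴ * Z = 0 := by
    rw [hZdef, Matrix.mul_sub, h1]
    have e : Eᴴ * (A * ((Γ - Q) * Aᴴ)) = (Eᴴ * A) * ((Γ - Q) * Aᴴ) := by
      simp only [Matrix.mul_assoc]
    rw [e, hEdef, hAdef, EkH_last_mul_Am, Matrix.zero_mul, zero_sub, neg_eq_zero]
  have hZΓ : Z = Γ * (E * (Eᴴ * (G * Z))) := by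
    conv_lhs => rw [← Matrix.one_mul Z, ← hΓG, Matrix.mul_assoc, hGZ]
  have hN : Eᴴ * (G * Z) = 0 := by
    have e : Eᴴ * Z = (Eᴴ * Γ * E) * (Eᴴ * (G * Z)) := by
      conv_lhs => rw [hZΓ]
      simp only [Matrix.mul_assoc]
    rw [hEZ, ← hcdef] at e
    have := congrArg (fun M => c⁻¹ * M) e
    simpa [← Matrix.mul_assoc, hci', Matrix.one_mul] using this.symm
  have hZ0 : Z = 0 := by
    rw [hZΓ, hN, Matrix.mul_zero, Matrix.mul_zero]
  -- key displacement identity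
  have key : Γ - A * Γ * Aᴴ = P - A * Q * Aᴴ := by
    have hX : Γ - A * Γ * Aᴴ - (P - A * Q * Aᴴ) = Z := by
      rw [hZdef]
      have e : A * ((Γ - Q) * Aᴴ) = A * Γ * Aᴴ - A * Q * Aᴴ := by
        rw [Matrix.sub_mul, Matrix.mul_sub]
        simp only [Matrix.mul_assoc]
      rw [e]
      abel
    have := hX.trans hZ0
    rw [sub_eq_zero] at this
    exact this
  -- telescoping
  rw [show (P - A * Q * Aᴴ : Matrix (Idx n p) (Idx n p) ℂ) = Γ - A * Γ * Aᴴ from key.symm]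
  have hstep : ∀ j : ℕ, A ^ j * (Γ - A * Γ * Aᴴ) * Aᴴ ^ j
      = A ^ j * Γ * Aᴴ ^ j - A ^ (j+1) * Γ * Aᴴ ^ (j+1) := by
    intro j
    rw [Matrix.mul_sub, Matrix.sub_mul, pow_succ A j, pow_succ' Aᴴ j]
    simp only [Matrix.mul_assoc]
  rw [Finset.sum_congr rfl (fun j _ => hstep j), Finset.sum_range_sub' (fun j => A ^ j * Γ * Aᴴ ^ j)]
  rw [pow_zero, pow_zero, Matrix.one_mul, Matrix.mul_one, hAdef, Am_pow_nilpotent,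
    Matrix.zero_mul, Matrix.zero_mul, sub_zero]

end
end
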